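/- Let x = ∑_{i=0}^{m-1} c_i · 2^(i·ℓ) with 0 ≤ c_i and ∑ c_i < 2^ℓ, and suppose all prefix sums ∑_{i=1}^j c_i are < 2^ℓ. Let M = ∑_{j=0}^{m-1} 2^(j·ℓ) (the all-ones-per-block multiplier). Then the block of the product x · M at position (m-1)·ℓ, i.e., (x·M / 2^((m-1)·ℓ)) mod 2^ℓ, equals ∑_{i=0}^{m-1} c_i. -/

import Mathlib

open Finset

lemma gm_blocks_lt (b : ℕ) (d : ℕ → ℕ) : ∀ n, (∀ k < n, d k < b) →
    ∑ k ∈ range n, d k * b ^ k < b ^ n := by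
  intro n
  induction n with
  | zero => simp
  | succ n ih =>
    intro h
    rw [Finset.sum_range_succ]
    have h1 := ih (fun k hk => h k (hk.trans (Nat.lt_succ_self n)))
    have h2 : d n + 1 ≤ b := h n (Nat.lt_succ_self n)
    calc ∑ k ∈ range n, d k * b ^ k + d n * b ^ n
        < b ^ n + d n * b ^ n := by omega
      _ = (d n + 1) * b ^ n := by ring
      _ ≤ b * b ^ n := Nat.mul_le_mul_right _ h2
      _ = b ^ (n + 1) := by ring

lemma gm_digit_extract (b n t : ℕ) (ht : t < n) (d : ℕ → ℕ)
    (h : ∀ k < n, d k < b) :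
    (∑ k ∈ range n, d k * b ^ k) / b ^ t % b = d t := by
  have hb : 0 < b := Nat.pos_of_ne_zero (by rintro rfl; exact Nat.not_lt_zero _ (h t ht))
  have hterm : ∀ k ∈ Ico (t + 1) n, d k * b ^ k
      = b ^ t * (b * (d k * b ^ (k - (t + 1)))) := by
    intro k hk
    have h1 : t + 1 ≤ k := (mem_Ico.mp hk).1
    calc d k * b ^ k = d k * b ^ (k - (t + 1) + (t + 1)) := by rw [Nat.sub_add_cancel h1]
      _ = b ^ t * (b * (d k * b ^ (k - (t + 1)))) := by rw [pow_add]; ring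
  have hsplit : ∑ k ∈ range n, d k * b ^ k
      = (∑ k ∈ range t, d k * b ^ k)
        + b ^ t * (d t + b * ∑ k ∈ Ico (t + 1) n, d k * b ^ (k - (t + 1))) := by
    rw [range_eq_Ico, ← Finset.sum_Ico_consecutive _ (Nat.zero_le t) ht.le]
    congr 1
    · rw [range_eq_Ico]
    rw [Finset.sum_eq_sum_Ico_succ_bot ht, Finset.sum_congr rfl hterm,
      ← Finset.mul_sum, ← Finset.mul_sum]
    ring
  have hlow : ∑ k ∈ range t, d k * b ^ k < b ^ t :=
    gm_blocks_lt b d t (fun k hk => h k (hk.trans ht))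
  rw [hsplit, Nat.add_mul_div_left _ _ (pow_pos hb t), Nat.div_eq_of_lt hlow,
    Nat.zero_add, Nat.add_mul_mod_self_left, Nat.mod_eq_of_lt (h t ht)]

/-- Gillies–Miller trick: multiplying the block decomposition `x = ∑ cᵢ 2^(iℓ)`
by the all-ones-per-block multiplier `M = ∑ⱼ 2^(jℓ)` sums all blocks into the
block of the product at position `(m-1)ℓ`, provided all prefix sums fit in `ℓ`
bits. -/
theorem gillies_miller_total (ℓ m : ℕ) (hm : 1 ≤ m) (c : ℕ → ℕ)
    (x M : ℕ)
    (hx : x = ∑ i ∈ Finset.range m, c i * 2 ^ (i * ℓ))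
    (hM : M = ∑ j ∈ Finset.range m, 2 ^ (j * ℓ))
    (hsum : ∑ i ∈ Finset.range m, c i < 2 ^ ℓ)
    (hpref : ∀ j ≤ m, ∑ i ∈ Finset.range j, c i < 2 ^ ℓ) :
    (x * M / 2 ^ ((m - 1) * ℓ)) % 2 ^ ℓ = ∑ i ∈ Finset.range m, c i := by
  set B : ℕ := 2 ^ ℓ with hB
  set n : ℕ := 2 * m - 1 with hn
  set d : ℕ → ℕ := fun k => ∑ i ∈ (range m).filter (fun i => i ≤ k ∧ k < i + m), c i
    with hd
  have hpow : ∀ i : ℕ, (2 : ℕ) ^ (i * ℓ) = B ^ i := by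
    intro i; rw [hB, mul_comm, pow_mul]
  have key : x * M = ∑ k ∈ range n, d k * B ^ k := by
    rw [hx, hM, Finset.sum_mul_sum]
    have step1 : ∀ i ∈ range m,
        ∑ j ∈ range m, c i * 2 ^ (i * ℓ) * 2 ^ (j * ℓ)
          = ∑ k ∈ range n, (if i ≤ k ∧ k < i + m then c i * B ^ k else 0) := by
      intro i hi
      have him : i < m := mem_range.mp hi
      rw [Finset.sum_ite, Finset.sum_const_zero, add_zero]
      have hfilt : (range n).filter (fun k => i ≤ k ∧ k < i + m) = Ico i (i + m) := by
        ext k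
        simp only [mem_filter, mem_range, mem_Ico]
        omega
      rw [hfilt, Finset.sum_Ico_eq_sum_range]
      have : i + m - i = m := by omega
      rw [this]
      apply Finset.sum_congr rfl
      intro j _
      rw [hpow i, hpow j, pow_add]
      ring
    rw [Finset.sum_congr rfl step1, Finset.sum_comm]
    apply Finset.sum_congr rfl
    intro k _
    rw [Finset.sum_ite, Finset.sum_const_zero, add_zero, hd, ← Finset.sum_mul]
  have hdlt : ∀ k < n, d k < B := by
    intro k _
    calc d k ≤ ∑ i ∈ range m, c i :=
          Finset.sum_le_sum_of_subset (Finset.filter_subset _ _)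
      _ < B := hsum
  have ht : m - 1 < n := by omega
  have hdm : d (m - 1) = ∑ i ∈ range m, c i := by
    rw [hd]
    apply Finset.sum_congr
    · apply Finset.filter_true_of_mem
      intro i hi
      have := mem_range.mp hi
      omega
    · intro _ _; rfl
  rw [key, hpow (m - 1), gm_digit_extract B n (m - 1) ht d hdlt, hdm]
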